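/- Regret bound for the gradient version of the specialist rule against convex combinations: if each ℓ_t is convex and (sub)differentiable on the simplex with subgradients bounded in sup-norm by G, then max over probability vectors q of R_T(S_η^grad, q) = Σ_t (ℓ_t(p_t) - ℓ_t(q^{E_t})) q(E_t) is at most (ln N)/η + (η/2) G² T. -/

import Mathlib

open Finset


lemma finset_hoeffding {ι : Type*} (s : Finset ι) (p x : ι → ℝ) (G t : ℝ) (ht : 0 ≤ t)
    (hp0 : ∀ i ∈ s, 0 ≤ p i) (hp1 : ∑ i ∈ s, p i = 1) (hx : ∀ i ∈ s, |x i| ≤ G) :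
    Real.log (∑ i ∈ s, p i * Real.exp (t * x i)) ≤
      t * (∑ i ∈ s, p i * x i) + t ^ 2 * G ^ 2 / 2 := by
  set Z : ℝ → ℝ := fun u => ∑ i ∈ s, p i * Real.exp (u * x i) with hZ
  set Z1 : ℝ → ℝ := fun u => ∑ i ∈ s, p i * x i * Real.exp (u * x i) with hZ1
  set Z2 : ℝ → ℝ := fun u => ∑ i ∈ s, p i * x i ^ 2 * Real.exp (u * x i) with hZ2
  obtain ⟨i0, hi0, hpi0⟩ : ∃ i ∈ s, 0 < p i := by
    by_contra h
    push_neg at h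
    have : ∑ i ∈ s, p i ≤ 0 := Finset.sum_nonpos fun i hi => h i hi
    linarith [hp1]
  have hZpos : ∀ u, 0 < Z u := by
    intro u
    refine Finset.sum_pos' (fun i hi => mul_nonneg (hp0 i hi) (Real.exp_pos _).le) ?_
    exact ⟨i0, hi0, mul_pos hpi0 (Real.exp_pos _)⟩
  have hZd : ∀ u, HasDerivAt Z (Z1 u) u := by
    intro u
    have : HasDerivAt (fun v => ∑ i ∈ s, p i * Real.exp (v * x i))
        (∑ i ∈ s, p i * x i * Real.exp (u * x i)) u := by
      refine HasDerivAt.fun_sum fun i _ => ?_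
      have h1 : HasDerivAt (fun v : ℝ => v * x i) (x i) u := hasDerivAt_mul_const (x i)
      have h2 := (h1.exp).const_mul (p i)
      exact h2.congr_deriv (by ring)
    exact this
  have hZ1d : ∀ u, HasDerivAt Z1 (Z2 u) u := by
    intro u
    have : HasDerivAt (fun v => ∑ i ∈ s, p i * x i * Real.exp (v * x i))
        (∑ i ∈ s, p i * x i ^ 2 * Real.exp (u * x i)) u := by
      refine HasDerivAt.fun_sum fun i _ => ?_
      have h1 : HasDerivAt (fun v : ℝ => v * x i) (x i) u := hasDerivAt_mul_const (x i)
      have h2 := (h1.exp).const_mul (p i * x i)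
      exact h2.congr_deriv (by ring)
    exact this
  set f : ℝ → ℝ := fun u => Real.log (Z u) with hf
  set f1 : ℝ → ℝ := fun u => Z1 u / Z u with hf1
  have hfd : ∀ u, HasDerivAt f (f1 u) u := fun u => (hZd u).log (hZpos u).ne'
  have hf1d : ∀ u, HasDerivAt f1 ((Z2 u * Z u - Z1 u * Z1 u) / Z u ^ 2) u := fun u =>
    (hZ1d u).div (hZd u) (hZpos u).ne'
  have hG : 0 ≤ G := le_trans (abs_nonneg _) (hx i0 hi0)
  have hZ2le : ∀ u, Z2 u ≤ G ^ 2 * Z u := by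
    intro u
    rw [hZ2, hZ, Finset.mul_sum]
    refine Finset.sum_le_sum fun i hi => ?_
    have hx2 : x i ^ 2 ≤ G ^ 2 := by
      have := hx i hi
      nlinarith [abs_nonneg (x i), sq_abs (x i)]
    have := Real.exp_pos (u * x i)
    nlinarith [hp0 i hi, this.le, mul_le_mul_of_nonneg_left hx2 (hp0 i hi)]
  have hderiv_bound : ∀ u, (Z2 u * Z u - Z1 u * Z1 u) / Z u ^ 2 ≤ G ^ 2 := by
    intro u
    rw [div_le_iff₀ (pow_pos (hZpos u) 2)]
    nlinarith [hZ2le u, hZpos u, sq_nonneg (Z1 u)]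
  -- f1 u ≤ f1 0 + G^2 * u for u ≥ 0
  have hmonoA : Monotone (fun u => G ^ 2 * u - f1 u) := by
    refine monotone_of_deriv_nonneg ?_ ?_
    · intro u
      have h := ((hasDerivAt_id u).const_mul (G ^ 2)).sub (hf1d u)
      simp only [id_eq] at h
      exact h.differentiableAt
    · intro u
      have h := ((hasDerivAt_id u).const_mul (G ^ 2)).sub (hf1d u)
      simp only [id_eq] at h
      rw [show (fun u => G ^ 2 * u - f1 u) = (fun y => G ^ 2 * y) - f1 from rfl, h.deriv]
      have := hderiv_bound u
      simp only [mul_one]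
      linarith
  have hf1le : ∀ u : ℝ, 0 ≤ u → f1 u ≤ f1 0 + G ^ 2 * u := by
    intro u hu
    have := hmonoA hu
    simp only [mul_zero, zero_sub] at this
    linarith
  -- B monotone on Ici 0
  set B : ℝ → ℝ := fun u => f 0 + u * f1 0 + u ^ 2 * G ^ 2 / 2 - f u with hB
  have hBd : ∀ u, HasDerivAt B (f1 0 + u * G ^ 2 - f1 u) u := by
    intro u
    have h1 : HasDerivAt (fun v : ℝ => f 0 + v * f1 0 + v ^ 2 * G ^ 2 / 2)
        (f1 0 + u * G ^ 2) u := by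
      have ha : HasDerivAt (fun v : ℝ => v * f1 0) (f1 0) u := hasDerivAt_mul_const _
      have hb : HasDerivAt (fun v : ℝ => v ^ 2 * G ^ 2 / 2) (u * G ^ 2) u := by
        have := (hasDerivAt_pow 2 u).mul_const (G ^ 2)
        have h' := this.div_const 2
        exact h'.congr_deriv (by ring)
      have := ((ha.const_add (f 0)).add hb)
      exact this
    exact h1.sub (hfd u)
  have hBmono : MonotoneOn B (Set.Ici (0:ℝ)) := by
    refine monotoneOn_of_deriv_nonneg (convex_Ici 0) ?_ ?_ ?_
    · exact (Differentiable.continuous fun u => (hBd u).differentiableAt).continuousOn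
    · exact fun u _ => ((hBd u).differentiableAt).differentiableWithinAt
    · intro u hu
      rw [interior_Ici] at hu
      rw [(hBd u).deriv]
      have := hf1le u (le_of_lt hu)
      nlinarith
  have hB0 : B 0 = 0 := by simp [hB]
  have hBt : 0 ≤ B t := hB0 ▸ hBmono (Set.self_mem_Ici) (Set.mem_Ici.mpr ht) ht
  have hf0 : f 0 = 0 := by
    simp [hf, hZ, hp1]
  have hf10 : f1 0 = ∑ i ∈ s, p i * x i := by
    simp [hf1, hZ1, hZ, hp1]
  have : f t ≤ f 0 + t * f1 0 + t ^ 2 * G ^ 2 / 2 := by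
    rw [hB] at hBt; linarith
  rw [hf0, hf10] at this
  calc Real.log (∑ i ∈ s, p i * Real.exp (t * x i)) = f t := rfl
    _ ≤ _ := by linarith

lemma sum_Icc_telescope (u : ℕ → ℝ) (T : ℕ) :
    ∑ t ∈ Finset.Icc 1 T, (u t - u (t + 1)) = u 1 - u (T + 1) := by
  induction T with
  | zero => simp
  | succ T ih =>
    rw [Finset.sum_Icc_succ_top (Nat.succ_le_succ (Nat.zero_le T)), ih]
    ring


/-- Regret bound for the gradient version `S_η^grad` of the specialist rule against convex
combinations of experts: if the losses are convex with subgradients bounded in sup-norm by `G`,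
then for every probability vector `q`,
`Σ_t (ℓ_t(p_t) - ℓ_t(q^{E_t})) q(E_t) ≤ (ln N)/η + (η/2) G² T`. -/
theorem specialist_gradient_regret_bound
    (N T : ℕ) (hN : 0 < N) (η G : ℝ) (hη : 0 < η) (hG : 0 ≤ G)
    (E : ℕ → Finset (Fin N)) (hE : ∀ t, (E t).Nonempty)
    (ℓ : ℕ → (Fin N → ℝ) → ℝ)
    (hconv : ∀ t, ConvexOn ℝ (stdSimplex ℝ (Fin N)) (ℓ t))
    (p : ℕ → Fin N → ℝ)
    -- `g t` is a subgradient of `ℓ t` at the played point `p t`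
    (g : ℕ → Fin N → ℝ)
    (hsub : ∀ t, ∀ x ∈ stdSimplex ℝ (Fin N),
      ℓ t (p t) + ∑ i : Fin N, g t i * (x i - p t i) ≤ ℓ t x)
    (hGbound : ∀ t i, |g t i| ≤ G)
    -- the specialist rule run on the pseudo-losses `x ↦ Σ_i g t i * x i`
    (w : ℕ → Fin N → ℝ)
    (hw1 : ∀ i, w 1 i = 1 / N)
    (hupd : ∀ t, ∀ i ∈ E t, w (t + 1) i =
      w t i * Real.exp (-η * g t i) * (∑ j ∈ E t, w t j) /
        (∑ k ∈ E t, w t k * Real.exp (-η * g t k)))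
    (hupd' : ∀ t, ∀ i, i ∉ E t → w (t + 1) i = w t i)
    (hp : ∀ t i, p t i = (if i ∈ E t then w t i else 0) / ∑ j ∈ E t, w t j) :
    ∀ q ∈ stdSimplex ℝ (Fin N),
      ∑ t ∈ Finset.Icc 1 T,
        (ℓ t (p t) -
          ℓ t (fun i => if (∑ j ∈ E t, q j) = 0 then 0
                else (if i ∈ E t then q i else 0) / ∑ j ∈ E t, q j)) *
          (∑ j ∈ E t, q j)
        ≤ Real.log N / η + η / 2 * G ^ 2 * T := by
  intro q hq
  obtain ⟨hq0, hq1⟩ := hq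
  have hNpos : (0:ℝ) < N := Nat.cast_pos.mpr hN
  -- positivity of weights
  have hwpos : ∀ t, 1 ≤ t → ∀ i, 0 < w t i := by
    intro t ht
    induction t, ht using Nat.le_induction with
    | base => intro i; rw [hw1]; positivity
    | succ t ht ih =>
      intro i
      by_cases hi : i ∈ E t
      · rw [hupd t i hi]
        have hW : 0 < ∑ j ∈ E t, w t j := Finset.sum_pos (fun j _ => ih j) (hE t)
        have hZ : 0 < ∑ k ∈ E t, w t k * Real.exp (-η * g t k) :=
          Finset.sum_pos (fun k _ => mul_pos (ih k) (Real.exp_pos _)) (hE t)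
        exact div_pos (mul_pos (mul_pos (ih i) (Real.exp_pos _)) hW) hZ
      · rw [hupd' t i hi]; exact ih i
  -- total mass invariant
  have hwsum : ∀ t, 1 ≤ t → ∑ i, w t i = 1 := by
    intro t ht
    induction t, ht using Nat.le_induction with
    | base =>
      simp only [hw1, Finset.sum_const, Finset.card_univ, Fintype.card_fin, nsmul_eq_mul]
      field_simp
    | succ t ht ih =>
      have hZ : 0 < ∑ k ∈ E t, w t k * Real.exp (-η * g t k) :=
        Finset.sum_pos (fun k _ => mul_pos (hwpos t ht k) (Real.exp_pos _)) (hE t)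
      have h1 : ∑ i ∈ E t, w (t + 1) i = ∑ i ∈ E t, w t i := by
        rw [Finset.sum_congr rfl (fun i hi => hupd t i hi), ← Finset.sum_div,
          ← Finset.sum_mul, mul_comm, mul_div_assoc, div_self hZ.ne', mul_one]
      have h2 : ∑ i ∈ (E t)ᶜ, w (t + 1) i = ∑ i ∈ (E t)ᶜ, w t i :=
        Finset.sum_congr rfl fun i hi => hupd' t i (Finset.mem_compl.mp hi)
      calc ∑ i, w (t + 1) i
          = ∑ i ∈ E t, w (t + 1) i + ∑ i ∈ (E t)ᶜ, w (t + 1) i :=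
            (Finset.sum_add_sum_compl _ _).symm
        _ = ∑ i ∈ E t, w t i + ∑ i ∈ (E t)ᶜ, w t i := by rw [h1, h2]
        _ = ∑ i, w t i := Finset.sum_add_sum_compl _ _
        _ = 1 := ih
  have hq_le1 : ∀ i, q i ≤ 1 := by
    intro i
    calc q i ≤ ∑ j, q j := Finset.single_le_sum (fun j _ => hq0 j) (Finset.mem_univ i)
      _ = 1 := hq1
  set D : ℕ → ℝ := fun t => ∑ i, q i * Real.log (q i / w t i) with hD
  set QE : ℕ → ℝ := fun t => ∑ j ∈ E t, q j with hQE
  set μ : ℕ → ℝ := fun t => ∑ i ∈ E t, w t i / (∑ j ∈ E t, w t j) * g t i with hμ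
  have hQE0 : ∀ t, 0 ≤ QE t := fun t => Finset.sum_nonneg fun j _ => hq0 j
  have hQE1 : ∀ t, QE t ≤ 1 := by
    intro t
    rw [hQE, ← hq1]
    exact Finset.sum_le_sum_of_subset_of_nonneg (Finset.subset_univ _) fun i _ _ => hq0 i
  -- D 1 ≤ log N
  have hD1 : D 1 ≤ Real.log N := by
    have hterm : ∀ i, q i * Real.log (q i / w 1 i) ≤ q i * Real.log N := by
      intro i
      rw [hw1]
      rcases eq_or_lt_of_le (hq0 i) with h | h
      · simp [← h]
      · have he : q i / (1 / (N:ℝ)) = q i * N := by field_simp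
        rw [he, Real.log_mul h.ne' hNpos.ne', mul_add]
        have hlog : q i * Real.log (q i) ≤ 0 := by
          have := mul_le_mul_of_nonneg_left (Real.log_nonpos (hq0 i) (hq_le1 i)) (hq0 i)
          simpa using this
        linarith
    calc D 1 ≤ ∑ i, q i * Real.log N := Finset.sum_le_sum fun i _ => hterm i
      _ = Real.log N := by rw [← Finset.sum_mul, hq1, one_mul]
  -- 0 ≤ D (T+1)
  have hDT : 0 ≤ D (T + 1) := by
    have hT1 : 1 ≤ T + 1 := Nat.succ_le_succ (Nat.zero_le T)
    have hw := hwpos (T + 1) hT1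
    have hterm : ∀ i, q i - w (T + 1) i ≤ q i * Real.log (q i / w (T + 1) i) := by
      intro i
      rcases eq_or_lt_of_le (hq0 i) with h | h
      · rw [← h]; simpa using (hw i).le
      · have hlog := Real.log_le_sub_one_of_pos (div_pos (hw i) h)
        have h2 := mul_le_mul_of_nonneg_left hlog (hq0 i)
        have he : q i * (w (T + 1) i / q i - 1) = w (T + 1) i - q i := by field_simp
        have h3 : q i * Real.log (q i / w (T + 1) i) = -(q i * Real.log (w (T + 1) i / q i)) := by
          rw [Real.log_div h.ne' (hw i).ne', Real.log_div (hw i).ne' h.ne']; ring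
        rw [h3]; rw [he] at h2; linarith
    calc (0:ℝ) = ∑ i, (q i - w (T + 1) i) := by
          rw [Finset.sum_sub_distrib, hq1, hwsum (T + 1) hT1]; ring
      _ ≤ D (T + 1) := Finset.sum_le_sum fun i _ => hterm i
  -- per-step inequality
  have hstep : ∀ t, 1 ≤ t →
      η * (QE t * μ t - ∑ i ∈ E t, q i * g t i) ≤
        D t - D (t + 1) + QE t * (η ^ 2 * G ^ 2 / 2) := by
    intro t ht
    have hW : 0 < ∑ j ∈ E t, w t j := Finset.sum_pos (fun j _ => hwpos t ht j) (hE t)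
    have hZ : 0 < ∑ k ∈ E t, w t k * Real.exp (-η * g t k) :=
      Finset.sum_pos (fun k _ => mul_pos (hwpos t ht k) (Real.exp_pos _)) (hE t)
    set C : ℝ := Real.log (∑ j ∈ E t, w t j) -
      Real.log (∑ k ∈ E t, w t k * Real.exp (-η * g t k)) with hC
    have termeq : ∀ i, q i * Real.log (q i / w t i) - q i * Real.log (q i / w (t + 1) i) =
        (if i ∈ E t then q i * (-(η * g t i) + C) else 0) := by
      intro i
      rcases eq_or_lt_of_le (hq0 i) with h | h
      · simp [← h]
      · by_cases hi : i ∈ E t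
        · rw [if_pos hi, hupd t i hi]
          have hwt := hwpos t ht i
          rw [hC, Real.log_div h.ne' hwt.ne',
            Real.log_div h.ne' (by positivity),
            Real.log_div (by positivity) hZ.ne',
            Real.log_mul (by positivity) hW.ne',
            Real.log_mul hwt.ne' (Real.exp_ne_zero _),
            Real.log_exp]
          ring
        · rw [if_neg hi, hupd' t i hi]; ring
    have claim1 : D t - D (t + 1) = ∑ i ∈ E t, q i * (-(η * g t i) + C) := by
      rw [hD]
      dsimp only
      rw [← Finset.sum_sub_distrib, Finset.sum_congr rfl (fun i _ => termeq i),
        Finset.sum_ite_mem, Finset.univ_inter]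
    have claim1' : D t - D (t + 1) = -(η * ∑ i ∈ E t, q i * g t i) + QE t * C := by
      rw [claim1, hQE]
      dsimp only
      calc ∑ i ∈ E t, q i * (-(η * g t i) + C)
          = ∑ i ∈ E t, (-(η * (q i * g t i)) + q i * C) :=
            Finset.sum_congr rfl fun i _ => by ring
        _ = ∑ i ∈ E t, -(η * (q i * g t i)) + ∑ i ∈ E t, q i * C :=
            Finset.sum_add_distrib
        _ = -(η * ∑ i ∈ E t, q i * g t i) + (∑ i ∈ E t, q i) * C := by
            rw [Finset.sum_neg_distrib, ← Finset.mul_sum, ← Finset.sum_mul]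
    -- Hoeffding step
    have hρ0 : ∀ i ∈ E t, 0 ≤ w t i / (∑ j ∈ E t, w t j) :=
      fun i _ => (div_pos (hwpos t ht i) hW).le
    have hρ1 : ∑ i ∈ E t, w t i / (∑ j ∈ E t, w t j) = 1 := by
      rw [← Finset.sum_div, div_self hW.ne']
    have hxb : ∀ i ∈ E t, |(fun i => -g t i) i| ≤ G := fun i _ => by
      simp only [abs_neg]; exact hGbound t i
    have hhoeff := finset_hoeffding (E t) (fun i => w t i / (∑ j ∈ E t, w t j))
      (fun i => -g t i) G η hη.le hρ0 hρ1 hxb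
    have hZW : (∑ i ∈ E t, w t i / (∑ j ∈ E t, w t j) * Real.exp (η * -g t i)) =
        (∑ k ∈ E t, w t k * Real.exp (-η * g t k)) / (∑ j ∈ E t, w t j) := by
      rw [Finset.sum_div]
      refine Finset.sum_congr rfl fun i _ => ?_
      rw [mul_neg, ← neg_mul]
      ring
    have hsum_neg : ∑ i ∈ E t, w t i / (∑ j ∈ E t, w t j) * -g t i = -μ t := by
      rw [hμ]
      dsimp only
      rw [← Finset.sum_neg_distrib]
      exact Finset.sum_congr rfl fun i _ => by ring
    rw [hZW, hsum_neg, Real.log_div hZ.ne' hW.ne'] at hhoeff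
    -- hhoeff : log Z - log W ≤ η * (-μ t) + η^2 * G^2 / 2
    have hle : η * μ t - η ^ 2 * G ^ 2 / 2 ≤ C := by rw [hC]; linarith
    have hmul := mul_le_mul_of_nonneg_left hle (hQE0 t)
    rw [claim1']
    nlinarith [hmul]
  -- summed pseudo-regret bound
  have hsum : ∑ t ∈ Finset.Icc 1 T, (QE t * μ t - ∑ i ∈ E t, q i * g t i) ≤
      Real.log N / η + η / 2 * G ^ 2 * T := by
    have h1 : ∑ t ∈ Finset.Icc 1 T,
        (η * (QE t * μ t - ∑ i ∈ E t, q i * g t i)) ≤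
        ∑ t ∈ Finset.Icc 1 T, (D t - D (t + 1) + QE t * (η ^ 2 * G ^ 2 / 2)) := by
      refine Finset.sum_le_sum fun t ht => hstep t ?_
      exact (Finset.mem_Icc.mp ht).1
    rw [Finset.sum_add_distrib, sum_Icc_telescope] at h1
    rw [← Finset.sum_mul] at h1
    have h2 : (∑ t ∈ Finset.Icc 1 T, QE t) * (η ^ 2 * G ^ 2 / 2) ≤
        T * (η ^ 2 * G ^ 2 / 2) := by
      refine mul_le_mul_of_nonneg_right ?_ (by positivity)
      calc ∑ t ∈ Finset.Icc 1 T, QE t ≤ ∑ t ∈ Finset.Icc 1 T, 1 :=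
            Finset.sum_le_sum fun t _ => hQE1 t
        _ = T := by simp [Nat.card_Icc]
    rw [← Finset.mul_sum] at h1
    have h3 : η * ∑ t ∈ Finset.Icc 1 T, (QE t * μ t - ∑ i ∈ E t, q i * g t i) ≤
        Real.log N + T * (η ^ 2 * G ^ 2 / 2) := by
      calc η * _ ≤ D 1 - D (T + 1) + (∑ t ∈ Finset.Icc 1 T, QE t) * (η ^ 2 * G ^ 2 / 2) := by
            rw [Finset.mul_sum]; rw [Finset.mul_sum] at h1
            convert h1 using 2 <;> ring
        _ ≤ Real.log N + T * (η ^ 2 * G ^ 2 / 2) := by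
            have := hD1; have := hDT; linarith
    have h4 : ∑ t ∈ Finset.Icc 1 T, (QE t * μ t - ∑ i ∈ E t, q i * g t i) ≤
        (Real.log N + T * (η ^ 2 * G ^ 2 / 2)) / η := by
      rw [le_div_iff₀ hη, mul_comm]
      exact h3
    calc ∑ t ∈ Finset.Icc 1 T, (QE t * μ t - ∑ i ∈ E t, q i * g t i) ≤ _ := h4
      _ = Real.log N / η + η / 2 * G ^ 2 * T := by field_simp
  -- convexity step and conclusion
  refine le_trans (Finset.sum_le_sum ?_) hsum
  intro t ht
  have ht1 : 1 ≤ t := (Finset.mem_Icc.mp ht).1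
  have hW : 0 < ∑ j ∈ E t, w t j := Finset.sum_pos (fun j _ => hwpos t ht1 j) (hE t)
  by_cases hz : (∑ j ∈ E t, q j) = 0
  · have hqe0 : QE t = 0 := hz
    have hqz : ∀ i ∈ E t, q i = 0 :=
      (Finset.sum_eq_zero_iff_of_nonneg (fun j _ => hq0 j)).mp hz
    have hsz : ∑ i ∈ E t, q i * g t i = 0 :=
      Finset.sum_eq_zero fun i hi => by rw [hqz i hi, zero_mul]
    rw [hz, mul_zero, hqe0, hsz, zero_mul, sub_zero]
  · have hQEpos : 0 < ∑ j ∈ E t, q j := lt_of_le_of_ne (hQE0 t) (Ne.symm hz)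
    simp only [if_neg hz]
    set x : Fin N → ℝ := fun i => (if i ∈ E t then q i else 0) / ∑ j ∈ E t, q j with hx
    have hxmem : x ∈ stdSimplex ℝ (Fin N) := by
      constructor
      · intro i
        rw [hx]
        dsimp only
        refine div_nonneg ?_ hQEpos.le
        split_ifs with h
        · exact hq0 i
        · exact le_rfl
      · show ∑ i : Fin N, x i = 1
        simp only [hx]
        rw [← Finset.sum_div, Finset.sum_ite_mem, Finset.univ_inter, div_self hz]
    have hsub' := hsub t x hxmem
    have hsplit : ∑ i : Fin N, g t i * (x i - p t i) =
        (∑ i : Fin N, g t i * x i) - ∑ i : Fin N, g t i * p t i := by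
      rw [← Finset.sum_sub_distrib]
      exact Finset.sum_congr rfl fun i _ => by ring
    have hgp : ∑ i : Fin N, g t i * p t i = μ t := by
      rw [hμ]
      calc ∑ i : Fin N, g t i * p t i
          = ∑ i : Fin N, (if i ∈ E t then w t i / (∑ j ∈ E t, w t j) * g t i else 0) := by
            refine Finset.sum_congr rfl fun i _ => ?_
            rw [hp t i]
            split_ifs with hi
            · ring
            · simp
        _ = ∑ i ∈ Finset.univ ∩ E t, w t i / (∑ j ∈ E t, w t j) * g t i :=
            Finset.sum_ite_mem _ _ _
        _ = ∑ i ∈ E t, w t i / (∑ j ∈ E t, w t j) * g t i := by rw [Finset.univ_inter]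
    have hgx : ∑ i : Fin N, g t i * x i =
        (∑ i ∈ E t, q i * g t i) / (∑ j ∈ E t, q j) := by
      simp only [hx]
      calc ∑ i : Fin N, g t i * ((if i ∈ E t then q i else 0) / ∑ j ∈ E t, q j)
          = ∑ i : Fin N, (if i ∈ E t then q i * g t i / (∑ j ∈ E t, q j) else 0) := by
            refine Finset.sum_congr rfl fun i _ => ?_
            split_ifs with hi
            · ring
            · simp
        _ = ∑ i ∈ Finset.univ ∩ E t, q i * g t i / (∑ j ∈ E t, q j) :=
            Finset.sum_ite_mem _ _ _
        _ = (∑ i ∈ E t, q i * g t i) / (∑ j ∈ E t, q j) := by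
            rw [Finset.univ_inter, Finset.sum_div]
    have hdiff : ℓ t (p t) - ℓ t x ≤
        μ t - (∑ i ∈ E t, q i * g t i) / (∑ j ∈ E t, q j) := by
      rw [hsplit] at hsub'
      rw [hgp, hgx] at hsub'
      linarith
    calc (ℓ t (p t) - ℓ t x) * (∑ j ∈ E t, q j)
        ≤ (μ t - (∑ i ∈ E t, q i * g t i) / (∑ j ∈ E t, q j)) * (∑ j ∈ E t, q j) :=
          mul_le_mul_of_nonneg_right hdiff hQEpos.le
      _ = QE t * μ t - ∑ i ∈ E t, q i * g t i := by
          rw [hQE]; dsimp only; field_simp
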